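/- Let A ∈ ℝ^{n×n} be Hurwitz, B ∈ ℝ^{n×m}, C ∈ ℝ^{1×n}, M ∈ ℝ^{n×n} symmetric, and let Q := ∫₀^∞ exp(Aᵀσ) Cᵀ C exp(Aσ) dσ + ∫₀^∞ ∫₀^∞ exp(Aᵀσ₁) M exp(Aσ₂) B Bᵀ exp(Aᵀσ₂) M exp(Aσ₁) dσ₁ dσ₂ be the total observability Gramian. Then ∫₀^∞ ‖C exp(Aσ) B‖_F² dσ + ∫₀^∞ ∫₀^∞ ‖Bᵀ exp(Aᵀσ₁) M exp(Aσ₂) B‖_F² dσ₁ dσ₂ = tr(Bᵀ Q B). -/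

import Mathlib

open Matrix MeasureTheory NormedSpace

lemma exp_mulVec_eq {n : ℕ} (A : Matrix (Fin n) (Fin n) ℂ) (μ : ℂ)
    (x : Fin n → ℂ) (K : ℕ) (h : (A - μ • 1) ^ K *ᵥ x = 0) (z : ℂ) :
    exp (z • A) *ᵥ x = Complex.exp (z * μ) •
      ∑ k ∈ Finset.range K, ((k.factorial : ℂ)⁻¹ * z ^ k) • ((A - μ • 1) ^ k *ᵥ x) := by
  letI : SeminormedRing (Matrix (Fin n) (Fin n) ℂ) := Matrix.linftyOpSemiNormedRing
  letI : NormedRing (Matrix (Fin n) (Fin n) ℂ) := Matrix.linftyOpNormedRing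
  letI : NormedAlgebra ℂ (Matrix (Fin n) (Fin n) ℂ) := Matrix.linftyOpNormedAlgebra
  letI : NormedAlgebra ℚ (Matrix (Fin n) (Fin n) ℂ) := Matrix.linftyOpNormedAlgebra
  set N := A - μ • 1 with hNdef
  have hsplit : z • A = (z * μ) • (1 : Matrix (Fin n) (Fin n) ℂ) + z • N := by
    rw [hNdef]; rw [smul_sub]; ring_nf; rw [smul_smul]; abel
  have hcomm : Commute ((z * μ) • (1 : Matrix (Fin n) (Fin n) ℂ)) (z • N) :=
    ((Commute.one_left (z • N)).smul_left _)
  have h1 : exp ((z * μ) • (1 : Matrix (Fin n) (Fin n) ℂ)) =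
      Complex.exp (z * μ) • (1 : Matrix (Fin n) (Fin n) ℂ) := by
    rw [← Algebra.algebraMap_eq_smul_one]
    refine (map_exp (algebraMap ℂ (Matrix (Fin n) (Fin n) ℂ))
      (continuous_algebraMap _ _) (z * μ)).symm.trans ?_
    rw [Complex.exp_eq_exp_ℂ, Algebra.algebraMap_eq_smul_one]
  have hexp : exp (z • A) = Complex.exp (z * μ) • exp (z • N) := by
    rw [hsplit, Matrix.exp_add_of_commute _ _ hcomm, h1, smul_mul_assoc, one_mul]
  -- mulVec of the tsum
  let L : Matrix (Fin n) (Fin n) ℂ →ₗ[ℂ] (Fin n → ℂ) :=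
    { toFun := fun M => M *ᵥ x
      map_add' := fun M P => Matrix.add_mulVec M P x
      map_smul' := fun c M => (smul_mulVec c M x) }
  have hLcont : Continuous L := LinearMap.continuous_of_finiteDimensional L
  have hsum := expSeries_summable' (𝕂 := ℂ) (z • N)
  have htsum : exp (z • N) *ᵥ x = ∑' k : ℕ, ((k.factorial : ℂ)⁻¹ • (z • N) ^ k) *ᵥ x := by
    have := (ContinuousLinearMap.map_tsum ⟨L, hLcont⟩ hsum)
    rw [exp_eq_tsum (𝕂 := ℂ)]
    exact this
  have hzero : ∀ k ∉ Finset.range K, ((k.factorial : ℂ)⁻¹ • (z • N) ^ k) *ᵥ x = 0 := by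
    intro k hk
    rw [Finset.mem_range, not_lt] at hk
    have : N ^ k *ᵥ x = 0 := by
      have : N ^ k = N ^ (k - K) * N ^ K := by rw [← pow_add]; congr 1; omega
      rw [this, ← Matrix.mulVec_mulVec, h, Matrix.mulVec_zero]
    rw [smul_pow, smul_mulVec, smul_mulVec, this, smul_zero, smul_zero]
  have : exp (z • N) *ᵥ x
      = ∑ k ∈ Finset.range K, ((k.factorial : ℂ)⁻¹ * z ^ k) • (N ^ k *ᵥ x) := by
    rw [htsum, tsum_eq_sum hzero]
    refine Finset.sum_congr rfl fun k _ => ?_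
    rw [smul_pow, smul_mulVec, smul_mulVec, smul_smul]
  rw [hexp, smul_mulVec, this]

lemma vec_decay {n : ℕ} (A : Matrix (Fin n) (Fin n) ℂ)
    (hA : ∀ μ ∈ spectrum ℂ A, μ.re < 0) (x : Fin n → ℂ) :
    ∃ c ε : ℝ, 0 ≤ c ∧ 0 < ε ∧ ∀ t : ℝ, 0 ≤ t →
      ‖exp ((t : ℂ) • A) *ᵥ x‖ ≤ c * Real.exp (-ε * t) := by
  set f : Module.End ℂ (Fin n → ℂ) := Matrix.toLinAlgEquiv' A with hf
  have hx : x ∈ ⨆ μ : ℂ, f.maxGenEigenspace μ := by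
    rw [Module.End.iSup_maxGenEigenspace_eq_top]; trivial
  refine Submodule.iSup_induction (motive := fun y => ∃ c ε : ℝ, 0 ≤ c ∧ 0 < ε ∧ ∀ t : ℝ, 0 ≤ t →
      ‖exp ((t : ℂ) • A) *ᵥ y‖ ≤ c * Real.exp (-ε * t)) _ hx ?_ ?_ ?_
  · intro μ y hy
    rcases eq_or_ne y 0 with rfl | hy0
    · exact ⟨0, 1, le_refl 0, one_pos, fun t ht => by simp [Matrix.mulVec_zero]⟩
    rw [Module.End.mem_maxGenEigenspace] at hy
    obtain ⟨K, hK⟩ := hy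
    have hμ : μ.re < 0 := by
      apply hA
      rw [← AlgEquiv.spectrum_eq (Matrix.toLinAlgEquiv' (R := ℂ) (n := Fin n)) A,
        ← Module.End.hasEigenvalue_iff_mem_spectrum]
      refine Module.End.hasEigenvalue_of_hasGenEigenvalue (k := K) ?_
      refine (Submodule.ne_bot_iff _).2 ⟨y, ?_, hy0⟩
      rw [Module.End.mem_genEigenspace_nat]
      exact hK
    have hmat : (A - μ • 1) ^ K *ᵥ y = 0 := by
      have h1 : Matrix.toLinAlgEquiv' ((A - μ • (1 : Matrix (Fin n) (Fin n) ℂ)) ^ K)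
          = (f - μ • 1) ^ K := by
        have h2 : Matrix.toLinAlgEquiv' (μ • (1 : Matrix (Fin n) (Fin n) ℂ))
            = μ • (1 : Module.End ℂ (Fin n → ℂ)) := by
          rw [← Algebra.algebraMap_eq_smul_one, AlgEquiv.commutes,
            Algebra.algebraMap_eq_smul_one]
        rw [map_pow, map_sub, h2, hf]
      calc (A - μ • 1) ^ K *ᵥ y
          = Matrix.toLinAlgEquiv' ((A - μ • 1) ^ K) y :=
            (Matrix.toLinAlgEquiv'_apply _ _).symm
        _ = ((f - μ • 1) ^ K) y := by rw [h1]
        _ = 0 := hK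
    set δ : ℝ := -μ.re / (2 * (K + 1)) with hδ
    have hδpos : 0 < δ := div_pos (by linarith) (by positivity)
    set S := ∑ k ∈ Finset.range K, ‖(A - μ • (1 : Matrix (Fin n) (Fin n) ℂ)) ^ k *ᵥ y‖ with hS
    have hS0 : 0 ≤ S := Finset.sum_nonneg fun _ _ => norm_nonneg _
    refine ⟨S * (δ⁻¹) ^ K * Real.exp (K * δ), -μ.re / 2, by positivity, by linarith,
      fun t ht => ?_⟩
    rw [exp_mulVec_eq A μ y K hmat]
    have hnorm1 : ‖Complex.exp ((t : ℂ) * μ)‖ = Real.exp (t * μ.re) := by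
      rw [Complex.norm_exp]
      congr 1
      simp [Complex.mul_re]
    have hsum : ‖∑ k ∈ Finset.range K, ((k.factorial : ℂ)⁻¹ * (t : ℂ) ^ k) •
        ((A - μ • 1) ^ k *ᵥ y)‖ ≤ S * (1 + t) ^ K := by
      refine (norm_sum_le _ _).trans ?_
      rw [hS, Finset.sum_mul]
      refine Finset.sum_le_sum fun k hk => ?_
      rw [norm_smul]
      have hco : ‖((k.factorial : ℂ)⁻¹ * (t : ℂ) ^ k)‖ ≤ (1 + t) ^ K := by
        rw [norm_mul, norm_inv, norm_pow]
        have h1 : ‖((k.factorial : ℕ) : ℂ)‖ = (k.factorial : ℝ) := by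
          simp
        have h2 : ‖((t : ℂ))‖ = t := by
          rw [Complex.norm_real, Real.norm_eq_abs, abs_of_nonneg ht]
        rw [h1, h2]
        have hfac : (1 : ℝ) ≤ (k.factorial : ℝ) := by
          exact_mod_cast Nat.one_le_iff_ne_zero.2 (Nat.factorial_ne_zero k)
        have hinv : ((k.factorial : ℝ))⁻¹ ≤ 1 := by
          rw [inv_le_one_iff₀]; right; exact hfac
        have htk : t ^ k ≤ (1 + t) ^ K := by
          calc t ^ k ≤ (1 + t) ^ k := pow_le_pow_left₀ ht (by linarith) k
            _ ≤ (1 + t) ^ K := pow_le_pow_right₀ (by linarith)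
                (le_of_lt (Finset.mem_range.1 hk))
        calc ((k.factorial : ℝ))⁻¹ * t ^ k ≤ 1 * (1 + t) ^ K := by
              apply mul_le_mul hinv htk (by positivity) (by norm_num)
          _ = (1 + t) ^ K := one_mul _
      calc ‖((k.factorial : ℂ)⁻¹ * (t : ℂ) ^ k)‖ * ‖(A - μ • 1) ^ k *ᵥ y‖
          ≤ (1 + t) ^ K * ‖(A - μ • 1) ^ k *ᵥ y‖ :=
            mul_le_mul_of_nonneg_right hco (norm_nonneg _)
        _ = ‖(A - μ • 1) ^ k *ᵥ y‖ * (1 + t) ^ K := mul_comm _ _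
    have hpoly : (1 + t) ^ K ≤ δ⁻¹ ^ K * Real.exp (K * δ * (1 + t)) := by
      have h1 : (1 + t) ≤ δ⁻¹ * Real.exp (δ * (1 + t)) := by
        have h2 := Real.add_one_le_exp (δ * (1 + t))
        calc 1 + t = δ⁻¹ * (δ * (1 + t)) := by field_simp
          _ ≤ δ⁻¹ * Real.exp (δ * (1 + t)) :=
              mul_le_mul_of_nonneg_left (by linarith) (by positivity)
      calc (1 + t) ^ K ≤ (δ⁻¹ * Real.exp (δ * (1 + t))) ^ K :=
            pow_le_pow_left₀ (by linarith) h1 K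
        _ = δ⁻¹ ^ K * Real.exp (δ * (1 + t)) ^ K := mul_pow _ _ _
        _ = δ⁻¹ ^ K * Real.exp (K * δ * (1 + t)) := by
            rw [← Real.exp_nat_mul]; ring_nf
    have hKδ : (K : ℝ) * δ ≤ -μ.re / 2 := by
      rw [hδ, mul_div_assoc']
      rw [div_le_div_iff₀ (by positivity) (by norm_num)]
      nlinarith
    calc ‖Complex.exp ((t : ℂ) * μ) • ∑ k ∈ Finset.range K,
          ((k.factorial : ℂ)⁻¹ * (t : ℂ) ^ k) • ((A - μ • 1) ^ k *ᵥ y)‖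
        = Real.exp (t * μ.re) * ‖∑ k ∈ Finset.range K,
            ((k.factorial : ℂ)⁻¹ * (t : ℂ) ^ k) • ((A - μ • 1) ^ k *ᵥ y)‖ := by
          rw [norm_smul, hnorm1]
      _ ≤ Real.exp (t * μ.re) * (S * (1 + t) ^ K) :=
          mul_le_mul_of_nonneg_left hsum (Real.exp_pos _).le
      _ ≤ Real.exp (t * μ.re) * (S * (δ⁻¹ ^ K * Real.exp (K * δ * (1 + t)))) := by
          apply mul_le_mul_of_nonneg_left _ (Real.exp_pos _).le
          exact mul_le_mul_of_nonneg_left hpoly hS0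
      _ = (S * δ⁻¹ ^ K * Real.exp (K * δ)) * Real.exp (t * μ.re + K * δ * t) := by
          rw [show (K : ℝ) * δ * (1 + t) = K * δ + K * δ * t by ring, Real.exp_add,
            Real.exp_add]
          ring
      _ ≤ (S * δ⁻¹ ^ K * Real.exp (K * δ)) * Real.exp (-(-μ.re / 2) * t) := by
          apply mul_le_mul_of_nonneg_left (Real.exp_le_exp.2 ?_) (by positivity)
          nlinarith
  · exact ⟨0, 1, le_refl 0, one_pos, fun t ht => by simp [Matrix.mulVec_zero]⟩
  · rintro x y hx hy
    obtain ⟨c₁, ε₁, hc₁, hε₁, hb₁⟩ := hx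
    obtain ⟨c₂, ε₂, hc₂, hε₂, hb₂⟩ := hy
    refine ⟨c₁ + c₂, min ε₁ ε₂, by positivity, lt_min hε₁ hε₂, fun t ht => ?_⟩
    calc ‖exp ((t : ℂ) • A) *ᵥ (x + y)‖
        ≤ ‖exp ((t : ℂ) • A) *ᵥ x‖ + ‖exp ((t : ℂ) • A) *ᵥ y‖ := by
          rw [Matrix.mulVec_add]; exact norm_add_le _ _
      _ ≤ c₁ * Real.exp (-ε₁ * t) + c₂ * Real.exp (-ε₂ * t) := add_le_add (hb₁ t ht) (hb₂ t ht)
      _ ≤ (c₁ + c₂) * Real.exp (-(min ε₁ ε₂) * t) := by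
          have h1 : Real.exp (-ε₁ * t) ≤ Real.exp (-(min ε₁ ε₂) * t) :=
            Real.exp_le_exp.2 (by nlinarith [min_le_left ε₁ ε₂])
          have h2 : Real.exp (-ε₂ * t) ≤ Real.exp (-(min ε₁ ε₂) * t) :=
            Real.exp_le_exp.2 (by nlinarith [min_le_right ε₁ ε₂])
          nlinarith [Real.exp_pos (-(min ε₁ ε₂) * t)]

lemma decay_combine {ι : Type*} (s : Finset ι) (g : ι → ℝ → ℝ)
    (h : ∀ j ∈ s, ∃ c ε : ℝ, 0 ≤ c ∧ 0 < ε ∧ ∀ t : ℝ, 0 ≤ t → g j t ≤ c * Real.exp (-ε * t)) :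
    ∃ c ε : ℝ, 0 ≤ c ∧ 0 < ε ∧ ∀ t : ℝ, 0 ≤ t → ∀ j ∈ s, g j t ≤ c * Real.exp (-ε * t) := by
  classical
  induction s using Finset.induction with
  | empty => exact ⟨0, 1, le_refl 0, one_pos, fun t ht j hj => absurd hj (Finset.notMem_empty j)⟩
  | insert a s hnotmem ih =>
    obtain ⟨c₁, ε₁, hc₁, hε₁, hb₁⟩ := h a (Finset.mem_insert_self a s)
    obtain ⟨c₂, ε₂, hc₂, hε₂, hb₂⟩ :=
      ih fun j hj => h j (Finset.mem_insert_of_mem hj)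
    refine ⟨max c₁ c₂, min ε₁ ε₂, le_max_of_le_left hc₁, lt_min hε₁ hε₂, fun t ht j hj => ?_⟩
    have hexp : ∀ ε' : ℝ, min ε₁ ε₂ ≤ ε' →
        Real.exp (-ε' * t) ≤ Real.exp (-(min ε₁ ε₂) * t) := fun ε' hε' =>
      Real.exp_le_exp.2 (by nlinarith)
    rcases Finset.mem_insert.1 hj with rfl | hj
    · calc g j t ≤ c₁ * Real.exp (-ε₁ * t) := hb₁ t ht
        _ ≤ max c₁ c₂ * Real.exp (-(min ε₁ ε₂) * t) :=
          mul_le_mul (le_max_left _ _) (hexp ε₁ (min_le_left _ _)) (Real.exp_pos _).le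
            (le_trans hc₁ (le_max_left _ _))
    · calc g j t ≤ c₂ * Real.exp (-ε₂ * t) := hb₂ t ht j hj
        _ ≤ max c₁ c₂ * Real.exp (-(min ε₁ ε₂) * t) :=
          mul_le_mul (le_max_right _ _) (hexp ε₂ (min_le_right _ _)) (Real.exp_pos _).le
            (le_trans hc₁ (le_max_left _ _))

lemma mat_decay {n : ℕ} (A : Matrix (Fin n) (Fin n) ℝ)
    (hA : ∀ μ ∈ spectrum ℂ (A.map (Complex.ofReal ·)), μ.re < 0) :
    ∃ c ε : ℝ, 0 ≤ c ∧ 0 < ε ∧ ∀ t : ℝ, 0 ≤ t → ∀ i j,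
      |(exp (t • A)) i j| ≤ c * Real.exp (-ε * t) := by
  letI : SeminormedRing (Matrix (Fin n) (Fin n) ℝ) := Matrix.linftyOpSemiNormedRing
  letI : NormedRing (Matrix (Fin n) (Fin n) ℝ) := Matrix.linftyOpNormedRing
  letI : NormedAlgebra ℝ (Matrix (Fin n) (Fin n) ℝ) := Matrix.linftyOpNormedAlgebra
  letI : SeminormedRing (Matrix (Fin n) (Fin n) ℂ) := Matrix.linftyOpSemiNormedRing
  letI : NormedRing (Matrix (Fin n) (Fin n) ℂ) := Matrix.linftyOpNormedRing
  letI : NormedAlgebra ℝ (Matrix (Fin n) (Fin n) ℂ) := Matrix.linftyOpNormedAlgebra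
  letI : NormedAlgebra ℂ (Matrix (Fin n) (Fin n) ℂ) := Matrix.linftyOpNormedAlgebra
  letI : NormedAlgebra ℚ (Matrix (Fin n) (Fin n) ℝ) := Matrix.linftyOpNormedAlgebra
  letI : NormedAlgebra ℚ (Matrix (Fin n) (Fin n) ℂ) := Matrix.linftyOpNormedAlgebra
  set A' := A.map (Complex.ofReal ·) with hA'
  have hmap : ∀ t : ℝ, (exp (t • A)).map (Complex.ofReal ·) = exp ((t : ℂ) • A') := by
    intro t
    have hF : Continuous (fun M : Matrix (Fin n) (Fin n) ℝ => M.map (Complex.ofReal ·)) :=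
      Continuous.matrix_map continuous_id Complex.continuous_ofReal
    have h1 := map_exp (Complex.ofRealHom.mapMatrix :
      Matrix (Fin n) (Fin n) ℝ →+* Matrix (Fin n) (Fin n) ℂ) hF (t • A)
    have h2 : (Complex.ofRealHom.mapMatrix :
        Matrix (Fin n) (Fin n) ℝ →+* Matrix (Fin n) (Fin n) ℂ) (t • A) = (t : ℂ) • A' := by
      ext i j
      simp [RingHom.mapMatrix_apply, Matrix.map_apply, hA', Complex.ofReal_mul]
    have h3 : (Complex.ofRealHom.mapMatrix :
        Matrix (Fin n) (Fin n) ℝ →+* Matrix (Fin n) (Fin n) ℂ) (exp (t • A))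
        = (exp (t • A)).map (Complex.ofReal ·) := rfl
    rw [← h3, ← h2]
    exact h1
  have hA'spec : ∀ μ ∈ spectrum ℂ A', μ.re < 0 := hA
  obtain ⟨c, ε, hc, hε, hb⟩ := decay_combine Finset.univ
    (fun j t => ‖exp ((t : ℂ) • A') *ᵥ Pi.single j (1 : ℂ)‖)
    (fun j _ => vec_decay A' hA'spec (Pi.single j 1))
  refine ⟨c, ε, hc, hε, fun t ht i j => ?_⟩
  have he : ((exp (t • A)) i j : ℂ) = (exp ((t : ℂ) • A')) i j := by
    have := congrFun (congrFun (hmap t) i) j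
    simpa [Matrix.map_apply] using this
  calc |(exp (t • A)) i j| = ‖((exp (t • A)) i j : ℂ)‖ := by
        rw [Complex.norm_real, Real.norm_eq_abs]
    _ = ‖(exp ((t : ℂ) • A')) i j‖ := by rw [he]
    _ = ‖(exp ((t : ℂ) • A') *ᵥ Pi.single j (1 : ℂ)) i‖ := by
        rw [Matrix.mulVec_single]; simp
    _ ≤ ‖exp ((t : ℂ) • A') *ᵥ Pi.single j (1 : ℂ)‖ := norm_le_pi_norm _ i
    _ ≤ c * Real.exp (-ε * t) := hb t ht j (Finset.mem_univ j)

lemma trace_transpose_mul_self {p q : ℕ} (X : Matrix (Fin p) (Fin q) ℝ) :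
    (Xᵀ * X).trace = ∑ i, ∑ j, (X i j) ^ 2 := by
  simp only [Matrix.trace, Matrix.diag, Matrix.mul_apply, Matrix.transpose_apply, sq]
  exact Finset.sum_comm

lemma trace_mul_transpose_self {p q : ℕ} (X : Matrix (Fin p) (Fin q) ℝ) :
    (X * Xᵀ).trace = ∑ i, ∑ j, (X i j) ^ 2 := by
  simp [Matrix.trace, Matrix.diag, Matrix.mul_apply, Matrix.transpose_apply, sq]

attribute [local instance] Matrix.normedAddCommGroup Matrix.normedSpace

lemma pinorm_mul {l m p : Type*} [Fintype l] [Fintype m] [Fintype p]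
    (X : Matrix l m ℝ) (Y : Matrix m p ℝ) :
    ‖X * Y‖ ≤ (Fintype.card m) * ‖X‖ * ‖Y‖ := by
  refine (Matrix.norm_le_iff (by positivity)).2 fun i j => ?_
  calc ‖(X * Y) i j‖ = |∑ k, X i k * Y k j| := by rw [Matrix.mul_apply]; rfl
    _ ≤ ∑ k, |X i k * Y k j| := Finset.abs_sum_le_sum_abs _ _
    _ ≤ ∑ _k : m, ‖X‖ * ‖Y‖ := by
        refine Finset.sum_le_sum fun k _ => ?_
        rw [abs_mul]
        exact mul_le_mul (Matrix.norm_entry_le_entrywise_sup_norm X)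
          (Matrix.norm_entry_le_entrywise_sup_norm Y) (abs_nonneg _) (norm_nonneg _)
    _ = (Fintype.card m) * ‖X‖ * ‖Y‖ := by
        rw [Finset.sum_const, Finset.card_univ, nsmul_eq_mul, mul_assoc]

lemma pinorm_mul_le {l m p : Type*} [Fintype l] [Fintype m] [Fintype p]
    {X : Matrix l m ℝ} {Y : Matrix m p ℝ} {a b : ℝ}
    (ha : ‖X‖ ≤ a) (hb : ‖Y‖ ≤ b) (hb0 : 0 ≤ b) :
    ‖X * Y‖ ≤ (Fintype.card m) * a * b := by
  have ha0 : 0 ≤ a := le_trans (norm_nonneg X) ha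
  refine (pinorm_mul X Y).trans ?_
  exact mul_le_mul (mul_le_mul_of_nonneg_left ha (Nat.cast_nonneg _)) hb (norm_nonneg _)
    (mul_nonneg (Nat.cast_nonneg _) ha0)

lemma pinorm_transpose {l m : Type*} [Fintype l] [Fintype m] (X : Matrix l m ℝ) :
    ‖Xᵀ‖ = ‖X‖ := by
  refine le_antisymm ?_ ?_ <;>
    refine (Matrix.norm_le_iff (norm_nonneg _)).2 fun i j => ?_
  · exact Matrix.norm_entry_le_entrywise_sup_norm X
  · exact Matrix.norm_entry_le_entrywise_sup_norm Xᵀ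

instance matContinuousENorm {p q : ℕ} : ContinuousENorm (Matrix (Fin p) (Fin q) ℝ) :=
  SeminormedAddGroup.toContinuousENorm

instance matPseudoMetrizable {p q : ℕ} :
    TopologicalSpace.PseudoMetrizableSpace (Matrix (Fin p) (Fin q) ℝ) :=
  inferInstanceAs (TopologicalSpace.PseudoMetrizableSpace (Fin p → Fin q → ℝ))

/-- The squared `H₂` norm of the LQO system `(A, B, C, M)`, defined via its Volterra
kernels, equals `tr(Bᵀ Q B)` where `Q` is the total observability Gramian; the squared
Frobenius norms are written as sums of squares of entries. -/
theorem lqo_h2_norm_gramian {n m : ℕ}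
    (A M : Matrix (Fin n) (Fin n) ℝ)
    (B : Matrix (Fin n) (Fin m) ℝ) (C : Matrix (Fin 1) (Fin n) ℝ)
    (hM : M.IsSymm)
    (hA : ∀ μ ∈ spectrum ℂ (A.map (Complex.ofReal ·)), μ.re < 0)
    (Q : Matrix (Fin n) (Fin n) ℝ)
    (hQ : Q = (∫ σ : ℝ in Set.Ioi 0, exp (σ • Aᵀ) * Cᵀ * C * exp (σ • A)) +
      ∫ σ : ℝ × ℝ in Set.Ioi (0:ℝ) ×ˢ Set.Ioi (0:ℝ),
        exp (σ.1 • Aᵀ) * M * exp (σ.2 • A) * B * Bᵀ *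
          exp (σ.2 • Aᵀ) * M * exp (σ.1 • A)) :
    (∫ σ : ℝ in Set.Ioi 0, ∑ i, ∑ j, ((C * exp (σ • A) * B) i j) ^ 2) +
      (∫ σ : ℝ × ℝ in Set.Ioi (0:ℝ) ×ˢ Set.Ioi (0:ℝ),
        ∑ i, ∑ j, ((Bᵀ * exp (σ.1 • Aᵀ) * M * exp (σ.2 • A) * B) i j) ^ 2) =
      (Bᵀ * Q * B).trace := by
  classical
  obtain ⟨c, ε, hc, hε, hbd⟩ := mat_decay A hA
  -- the transpose fact
  have hT : ∀ σ : ℝ, exp (σ • Aᵀ) = (exp (σ • A))ᵀ := fun σ => by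
    rw [← Matrix.transpose_smul, Matrix.exp_transpose]
  -- norm bounds
  have hEb : ∀ σ : ℝ, 0 ≤ σ → ‖exp (σ • A)‖ ≤ c * Real.exp (-ε * σ) := fun σ hσ =>
    (Matrix.norm_le_iff (by positivity)).2 fun i j => hbd σ hσ i j
  have hETb : ∀ σ : ℝ, 0 ≤ σ → ‖exp (σ • Aᵀ)‖ ≤ c * Real.exp (-ε * σ) := fun σ hσ => by
    rw [hT, pinorm_transpose]; exact hEb σ hσ
  -- continuity
  have hEcont : Continuous fun σ : ℝ => exp (σ • A) := by
    letI : SeminormedRing (Matrix (Fin n) (Fin n) ℝ) := Matrix.linftyOpSemiNormedRing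
    letI : NormedRing (Matrix (Fin n) (Fin n) ℝ) := Matrix.linftyOpNormedRing
    letI : NormedAlgebra ℝ (Matrix (Fin n) (Fin n) ℝ) := Matrix.linftyOpNormedAlgebra
    letI : NormedAlgebra ℚ (Matrix (Fin n) (Fin n) ℝ) := Matrix.linftyOpNormedAlgebra
    open scoped Norms.Operator in
    exact exp_continuous.comp (continuous_id.smul continuous_const)
  have hETcont : Continuous fun σ : ℝ => exp (σ • Aᵀ) := by
    letI : SeminormedRing (Matrix (Fin n) (Fin n) ℝ) := Matrix.linftyOpSemiNormedRing
    letI : NormedRing (Matrix (Fin n) (Fin n) ℝ) := Matrix.linftyOpNormedRing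
    letI : NormedAlgebra ℝ (Matrix (Fin n) (Fin n) ℝ) := Matrix.linftyOpNormedAlgebra
    letI : NormedAlgebra ℚ (Matrix (Fin n) (Fin n) ℝ) := Matrix.linftyOpNormedAlgebra
    open scoped Norms.Operator in
    exact exp_continuous.comp (continuous_id.smul continuous_const)
  -- the two matrix-valued integrands
  set F₁ : ℝ → Matrix (Fin n) (Fin n) ℝ :=
    fun σ => exp (σ • Aᵀ) * Cᵀ * C * exp (σ • A) with hF₁
  set F₂ : ℝ × ℝ → Matrix (Fin n) (Fin n) ℝ :=
    fun σ => exp (σ.1 • Aᵀ) * M * exp (σ.2 • A) * B * Bᵀ *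
      exp (σ.2 • Aᵀ) * M * exp (σ.1 • A) with hF₂
  have hF₁cont : Continuous F₁ :=
    ((hETcont.matrix_mul continuous_const).matrix_mul continuous_const).matrix_mul hEcont
  have hF₂cont : Continuous F₂ := by
    have h1 : Continuous fun σ : ℝ × ℝ => exp (σ.1 • Aᵀ) := hETcont.comp continuous_fst
    have h2 : Continuous fun σ : ℝ × ℝ => exp (σ.2 • A) := hEcont.comp continuous_snd
    have h3 : Continuous fun σ : ℝ × ℝ => exp (σ.2 • Aᵀ) := hETcont.comp continuous_snd
    have h4 : Continuous fun σ : ℝ × ℝ => exp (σ.1 • A) := hEcont.comp continuous_fst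
    exact ((((((h1.matrix_mul continuous_const).matrix_mul h2).matrix_mul
      continuous_const).matrix_mul continuous_const).matrix_mul h3).matrix_mul
      continuous_const).matrix_mul h4
  -- integrability of F₁
  set c₁ : ℝ := (Fintype.card (Fin n)) *
      ((Fintype.card (Fin 1)) * ((Fintype.card (Fin n)) * c * ‖Cᵀ‖) * ‖C‖) * c with hc₁
  have hc₁0 : 0 ≤ c₁ := by positivity
  have hF₁bd : ∀ σ : ℝ, 0 ≤ σ → ‖F₁ σ‖ ≤ c₁ * Real.exp (-ε * σ) := by
    intro σ hσ0
    set e : ℝ := Real.exp (-ε * σ) with hedef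
    have he0 : 0 < e := Real.exp_pos _
    have he1 : e ≤ 1 := Real.exp_le_one_iff.2 (by nlinarith)
    have t1 : ‖exp (σ • Aᵀ) * Cᵀ‖ ≤ (Fintype.card (Fin n)) * (c * e) * ‖Cᵀ‖ :=
      pinorm_mul_le (hETb σ hσ0) (le_refl _) (norm_nonneg _)
    have t2 : ‖exp (σ • Aᵀ) * Cᵀ * C‖ ≤
        (Fintype.card (Fin 1)) * ((Fintype.card (Fin n)) * (c * e) * ‖Cᵀ‖) * ‖C‖ :=
      pinorm_mul_le t1 (le_refl _) (norm_nonneg _)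
    have t3 : ‖F₁ σ‖ ≤ (Fintype.card (Fin n)) *
        ((Fintype.card (Fin 1)) * ((Fintype.card (Fin n)) * (c * e) * ‖Cᵀ‖) * ‖C‖) *
        (c * e) :=
      pinorm_mul_le t2 (hEb σ hσ0) (by positivity)
    calc ‖F₁ σ‖ ≤ _ := t3
      _ = c₁ * e * e := by rw [hc₁]; ring
      _ ≤ c₁ * e := mul_le_of_le_one_right (by positivity) he1
  have hF₁int : IntegrableOn F₁ (Set.Ioi (0:ℝ)) := by
    refine Integrable.mono' (g := fun σ => c₁ * Real.exp (-ε * σ))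
      ((exp_neg_integrableOn_Ioi 0 hε).const_mul c₁)
      (hF₁cont.aestronglyMeasurable.restrict) ?_
    refine (ae_restrict_iff' measurableSet_Ioi).2 (Filter.Eventually.of_forall fun σ hσ => ?_)
    exact hF₁bd σ (le_of_lt hσ)
  -- integrability of F₂
  set c₂ : ℝ := (Fintype.card (Fin n)) * ((Fintype.card (Fin n)) * ((Fintype.card (Fin n)) *
      ((Fintype.card (Fin m)) * ((Fintype.card (Fin n)) * ((Fintype.card (Fin n)) *
      ((Fintype.card (Fin n)) * c * ‖M‖) * c) * ‖B‖) * ‖Bᵀ‖) * c) * ‖M‖) * c with hc₂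
  have hc₂0 : 0 ≤ c₂ := by positivity
  have hF₂bd : ∀ z : ℝ × ℝ, 0 ≤ z.1 → 0 ≤ z.2 →
      ‖F₂ z‖ ≤ c₂ * (Real.exp (-ε * z.1) * Real.exp (-ε * z.2)) := by
    rintro ⟨σ₁, σ₂⟩ h1 h2
    set e₁ : ℝ := Real.exp (-ε * σ₁) with he₁def
    set e₂ : ℝ := Real.exp (-ε * σ₂) with he₂def
    have he₁0 : 0 < e₁ := Real.exp_pos _
    have he₂0 : 0 < e₂ := Real.exp_pos _
    have he₁1 : e₁ ≤ 1 := Real.exp_le_one_iff.2 (by nlinarith)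
    have he₂1 : e₂ ≤ 1 := Real.exp_le_one_iff.2 (by nlinarith)
    have t1 : ‖exp (σ₁ • Aᵀ) * M‖ ≤ (Fintype.card (Fin n)) * (c * e₁) * ‖M‖ :=
      pinorm_mul_le (hETb σ₁ h1) (le_refl _) (norm_nonneg _)
    have t2 : ‖exp (σ₁ • Aᵀ) * M * exp (σ₂ • A)‖ ≤ (Fintype.card (Fin n)) *
        ((Fintype.card (Fin n)) * (c * e₁) * ‖M‖) * (c * e₂) :=
      pinorm_mul_le t1 (hEb σ₂ h2) (by positivity)
    have t3 := pinorm_mul_le t2 (le_refl ‖B‖) (norm_nonneg B)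
    have t4 := pinorm_mul_le t3 (le_refl ‖Bᵀ‖) (norm_nonneg Bᵀ)
    have t5 := pinorm_mul_le t4 (hETb σ₂ h2) (by positivity)
    have t6 := pinorm_mul_le t5 (le_refl ‖M‖) (norm_nonneg M)
    have t7 := pinorm_mul_le t6 (hEb σ₁ h1) (by positivity)
    rw [← he₁def, ← he₂def] at t7
    calc ‖F₂ (σ₁, σ₂)‖ ≤ _ := t7
      _ = c₂ * (e₁ * e₂) * (e₂ * e₁) := by rw [hc₂]; ring
      _ ≤ c₂ * (e₁ * e₂) := mul_le_of_le_one_right (by positivity)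
          (mul_le_one₀ he₂1 he₁0.le he₁1)
  have hmeq : (volume : Measure (ℝ × ℝ)).restrict (Set.Ioi 0 ×ˢ Set.Ioi 0) =
      ((volume : Measure ℝ).restrict (Set.Ioi 0)).prod
        ((volume : Measure ℝ).restrict (Set.Ioi 0)) := by
    rw [Measure.volume_eq_prod, Measure.prod_restrict]

  have hgint : Integrable (fun z : ℝ × ℝ => c₂ * (Real.exp (-ε * z.1) * Real.exp (-ε * z.2)))
      ((volume : Measure (ℝ × ℝ)).restrict (Set.Ioi 0 ×ˢ Set.Ioi 0)) := by
    rw [hmeq]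
    exact (Integrable.mul_prod (exp_neg_integrableOn_Ioi 0 hε)
      (exp_neg_integrableOn_Ioi 0 hε)).const_mul c₂
  have hF₂int : IntegrableOn F₂ (Set.Ioi (0:ℝ) ×ˢ Set.Ioi (0:ℝ)) := by
    refine Integrable.mono' hgint (hF₂cont.aestronglyMeasurable.restrict) ?_
    refine (ae_restrict_iff' (measurableSet_Ioi.prod measurableSet_Ioi)).2
      (Filter.Eventually.of_forall fun z hz => ?_)
    exact hF₂bd z (le_of_lt hz.1) (le_of_lt hz.2)
  -- the continuous linear functional X ↦ tr (Bᵀ X B)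
  let Llin : Matrix (Fin n) (Fin n) ℝ →ₗ[ℝ] ℝ :=
    { toFun := fun X => (Bᵀ * X * B).trace
      map_add' := fun X Y => by
        rw [Matrix.mul_add, Matrix.add_mul, Matrix.trace_add]
      map_smul' := fun r X => by
        rw [Matrix.mul_smul, Matrix.smul_mul, Matrix.trace_smul, RingHom.id_apply,
          smul_eq_mul] }
  let L : Matrix (Fin n) (Fin n) ℝ →L[ℝ] ℝ := LinearMap.toContinuousLinearMap Llin
  have hL : ∀ X, L X = (Bᵀ * X * B).trace := fun X => rfl
  have hp1 : ∀ σ : ℝ, (∑ i, ∑ j, ((C * exp (σ • A) * B) i j) ^ 2) = L (F₁ σ) := by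
    intro σ
    rw [hL, ← trace_transpose_mul_self]
    congr 1
    rw [hF₁]
    simp only [hT σ, Matrix.transpose_mul, Matrix.transpose_transpose, Matrix.mul_assoc]
  have hp2 : ∀ z : ℝ × ℝ,
      (∑ i, ∑ j, ((Bᵀ * exp (z.1 • Aᵀ) * M * exp (z.2 • A) * B) i j) ^ 2)
        = L (F₂ z) := by
    intro z
    rw [hL, ← trace_mul_transpose_self]
    congr 1
    rw [hF₂]
    simp only [hT z.1, hT z.2, Matrix.transpose_mul, Matrix.transpose_transpose, hM.eq,
      Matrix.mul_assoc]
  rw [hQ]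
  simp only [hp1, hp2]
  rw [← hL, map_add]
  exact congrArg₂ (· + ·) (ContinuousLinearMap.integral_comp_comm L hF₁int)
    (ContinuousLinearMap.integral_comp_comm L hF₂int)
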